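/- There is no (2+1)-color connected colored edge graph G(V,E,C,f) with |V| = 4 and |C| = 4. -/

import Mathlib

open SimpleGraph Finset

/-- A preconnected simple graph on `Fin 4` has at least 3 edges. -/
lemma preconnected_three_le_card_edges (H : SimpleGraph (Fin 4)) [DecidableRel H.Adj]
    (h : H.Preconnected) : 3 ≤ H.edgeFinset.card := by
  classical
  -- choose shortest walks to 0
  choose p hp using fun w : Fin 4 => (h w 0).exists_walk_length_eq_dist
  have hnil : ∀ w : Fin 4, w ≠ 0 → ¬ (p w).Nil := fun w hw =>
    SimpleGraph.Walk.not_nil_of_ne hw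
  have hdpos : ∀ w : Fin 4, w ≠ 0 → 0 < H.dist w 0 := fun w hw =>
    (h w 0).pos_dist_of_ne hw
  have key : 3 ≤ H.edgeFinset.card := by
    have hcompl : (({0}ᶜ : Finset (Fin 4))).card = 3 := by decide
    rw [← hcompl]
    apply Finset.card_le_card_of_injOn
      (fun w => if hw : w = 0 then s(0,0) else ((p w).firstDart (hnil w hw)).edge)
    · intro w hw
      simp only [Finset.mem_coe, Finset.mem_compl, Finset.mem_singleton] at hw
      simp only [Finset.mem_coe, dif_neg hw]
      simp [SimpleGraph.Walk.edge_firstDart, ((p w).adj_snd (hnil w hw))]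
    · intro a ha b hb hab
      simp only [Finset.mem_coe, Finset.mem_compl, Finset.mem_singleton] at ha hb
      simp only [dif_neg ha, dif_neg hb] at hab
      rw [SimpleGraph.dart_edge_eq_iff] at hab
      rcases hab with hab | hab
      · exact congrArg (·.fst) hab
      · -- swapped darts: a → b and b → a are the first steps
        have h1 : (p a).getVert 1 = b := congrArg (·.snd) hab
        have h2 : a = (p b).getVert 1 := (congrArg (·.fst) hab)
        exfalso
        have hta : H.dist b 0 ≤ (p a).tail.length := by
          have := SimpleGraph.dist_le ((p a).tail.copy h1 rfl)
          simpa using this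
        have htb : H.dist a 0 ≤ (p b).tail.length := by
          have := SimpleGraph.dist_le ((p b).tail.copy h2.symm rfl)
          simpa using this
        have hla : (p a).tail.length + 1 = (p a).length :=
          SimpleGraph.Walk.length_tail_add_one (hnil a ha)
        have hlb : (p b).tail.length + 1 = (p b).length :=
          SimpleGraph.Walk.length_tail_add_one (hnil b hb)
        have := hp a; have := hp b
        omega
  exact key

/-- There is no `(2+1)`-color connected colored edge graph with
`|V| = 4` and `|C| = 4`. -/
theorem stmt_8 :
    ¬ ∃ (G : SimpleGraph (Fin 4)) (f : Sym2 (Fin 4) → Fin 4),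
        (∀ c : Fin 4, ∃ e ∈ G.edgeSet, f e = c) ∧
        ∀ Ct : Finset (Fin 4), Ct.card = 2 →
          ∀ A B : Fin 4, (G.deleteEdges (f ⁻¹' ↑Ct)).Reachable A B := by
  classical
  rintro ⟨G, f, hsurj, hconn⟩
  set n : Fin 4 → ℕ := fun c => (G.edgeFinset.filter (fun e => f e = c)).card with hn
  -- total edges at most 6
  have htot : G.edgeFinset.card ≤ 6 := by
    have hsub : G.edgeFinset ⊆ (⊤ : SimpleGraph (Fin 4)).edgeFinset :=
      SimpleGraph.edgeFinset_mono le_top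
    have := Finset.card_le_card hsub
    have htop : (⊤ : SimpleGraph (Fin 4)).edgeFinset.card = 6 := by
      rw [SimpleGraph.card_edgeFinset_top_eq_card_choose_two]
      decide
    omega
  have hsum : ∑ c, n c = G.edgeFinset.card :=
    (Finset.card_eq_sum_card_fiberwise (fun x _ => Finset.mem_univ (f x))).symm
  have hone : ∀ c, 1 ≤ n c := by
    intro c
    obtain ⟨e, he, hfe⟩ := hsurj c
    exact Finset.card_pos.mpr ⟨e, Finset.mem_filter.mpr ⟨SimpleGraph.mem_edgeFinset.mpr he, hfe⟩⟩
  have hpair : ∀ a b : Fin 4, a ≠ b → 3 ≤ n a + n b := by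
    intro a b hab
    set Ct : Finset (Fin 4) := ({a, b} : Finset (Fin 4))ᶜ with hCt
    have hcard : Ct.card = 2 := by
      rw [hCt, Finset.card_compl, Finset.card_pair hab]
      simp
    have hpre : (G.deleteEdges (f ⁻¹' ↑Ct)).Preconnected := hconn Ct hcard
    have h3 : 3 ≤ (G.deleteEdges (f ⁻¹' ↑Ct)).edgeFinset.card :=
      preconnected_three_le_card_edges _ hpre
    have hEq : (G.deleteEdges (f ⁻¹' ↑Ct)).edgeFinset
        = G.edgeFinset.filter (fun e => f e = a ∨ f e = b) := by
      ext e
      simp only [SimpleGraph.mem_edgeFinset, SimpleGraph.edgeSet_deleteEdges,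
        Set.mem_diff, Set.mem_preimage, Finset.mem_coe, Finset.mem_filter, hCt,
        Finset.mem_compl, Finset.mem_insert, Finset.mem_singleton, not_not]
    rw [hEq, Finset.filter_or] at h3
    calc 3 ≤ _ := h3
      _ ≤ n a + n b := Finset.card_union_le _ _
  have e01 := hpair 0 1 (by decide)
  have e23 := hpair 2 3 (by decide)
  have e02 := hpair 0 2 (by decide)
  have e13 := hpair 1 3 (by decide)
  have e03 := hpair 0 3 (by decide)
  have e12 := hpair 1 2 (by decide)
  have o0 := hone 0
  have o1 := hone 1
  have o2 := hone 2
  have o3 := hone 3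
  have hs : n 0 + n 1 + n 2 + n 3 = ∑ c, n c := by
    rw [Fin.sum_univ_four]
  omega
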